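/- Let n ≥ 1 and let k ∈ ℂ^{2n×2n} be complex symplectic orthogonal, i.e. kᵗ J_n k = J_n and k kᵗ = 1_{2n}. Suppose k = k₀ k_h, where k₀ is a real symplectic orthogonal matrix and k_h = [[A, B],[−B, A]] with A, B ∈ ℂ^{n×n} satisfying AAᵗ + BBᵗ = 1_n, ABᵗ = BAᵗ, conj(A)ᵗ = A and conj(B)ᵗ = −B, so that h := A + iB is Hermitian. Let R = diag(r_1,…,r_n) with r_j ≥ 0, set r = diag(R, −R), and suppose k·exp(r)·conj(k)ᵗ = u·exp(ϱ)·conj(u)ᵗ, where u ∈ Sp_n(ℂ) ∩ U(2n) is unitary symplectic and ϱ = diag(P, −P) with P = diag(ϱ_1,…,ϱ_n) real. Then det(h) ≤ exp(Σ_{j=1}^n |ϱ_j|) / Π_{j=1}^n cosh(r_j). -/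

import Mathlib

open scoped BigOperators
open Matrix

noncomputable section

/-- The standard complex symplectic form matrix `J_n = [[0, 1],[−1, 0]]`. -/
def JmatC (n : ℕ) : Matrix (Fin n ⊕ Fin n) (Fin n ⊕ Fin n) ℂ :=
  Matrix.fromBlocks 0 1 (-1) 0

/-- The real symplectic form matrix `J_n`. -/
def JmatR (n : ℕ) : Matrix (Fin n ⊕ Fin n) (Fin n ⊕ Fin n) ℝ :=
  Matrix.fromBlocks 0 1 (-1) 0

/-- The diagonal matrix `exp(diag(v, −v))` (the matrix exponential of a diagonal matrix
is the entrywise exponential of the diagonal). -/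
def expDiag {n : ℕ} (v : Fin n → ℝ) : Matrix (Fin n ⊕ Fin n) (Fin n ⊕ Fin n) ℂ :=
  Matrix.fromBlocks (Matrix.diagonal fun j => ((Real.exp (v j) : ℝ) : ℂ)) 0 0
    (Matrix.diagonal fun j => ((Real.exp (-(v j)) : ℝ) : ℂ))

section AuxLemmas

open Finset
open scoped ComplexOrder

set_option linter.unusedSectionVars false

/-- Cauchy–Binet style column expansion of the determinant of a product. -/
lemma aux_cb_expand {N : ℕ} {m : Type*} [Fintype m] [DecidableEq m]
    (M : Matrix (Fin N) m ℂ) (B : Matrix m (Fin N) ℂ) :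
    (M * B).det = ∑ p : Fin N → m, (∏ i, B (p i) i) * (M.submatrix id p).det := by
  calc (M * B).det
      = ∑ σ : Equiv.Perm (Fin N), ((Equiv.Perm.sign σ : ℤ) : ℂ) *
          ∏ i, (∑ s, M (σ i) s * B s i) := by
        simp [Matrix.det_apply', Matrix.mul_apply]
    _ = ∑ σ : Equiv.Perm (Fin N), ∑ p : Fin N → m, ((Equiv.Perm.sign σ : ℤ) : ℂ) *
          ∏ i, M (σ i) (p i) * B (p i) i := by
        congr 1; ext σ
        rw [Finset.prod_univ_sum, Finset.mul_sum]
        simp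
    _ = ∑ p : Fin N → m, ∑ σ : Equiv.Perm (Fin N), ((Equiv.Perm.sign σ : ℤ) : ℂ) *
          ∏ i, M (σ i) (p i) * B (p i) i := by
        rw [Finset.sum_comm]
    _ = ∑ p : Fin N → m, (∏ i, B (p i) i) * (M.submatrix id p).det := by
        congr 1; ext p
        rw [Matrix.det_apply', Finset.mul_sum]
        congr 1; ext σ
        rw [Finset.prod_mul_distrib]
        simp only [Matrix.submatrix_apply, id_eq]
        ring

lemma aux_psd_det_re_nonneg {N' : ℕ} (M : Matrix (Fin N') (Fin N') ℂ) (h : M.PosSemidef) :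
    0 ≤ M.det.re := by
  rw [h.isHermitian.det_eq_prod_eigenvalues]
  have := Finset.prod_nonneg (fun i (_ : i ∈ Finset.univ) => h.eigenvalues_nonneg i)
  norm_cast

/-- The key inequality: if every subset product of the (real) diagonal weights is
bounded by `c`, then the determinant of the compression `X D Xᴴ` is bounded by
`c` times the determinant of the Gram matrix `X Xᴴ`. -/
lemma aux_core_ineq {N : ℕ} {m : Type*} [Fintype m] [DecidableEq m]
    (X : Matrix (Fin N) m ℂ) (d : m → ℝ) (c : ℝ)
    (hc : ∀ S : Finset m, ∏ s ∈ S, d s ≤ c) :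
    ((X * Matrix.diagonal (fun s => (d s : ℂ)) * Xᴴ).det).re ≤ c * ((X * Xᴴ).det).re := by
  set u : (Fin N → m) → ℂ :=
    fun p => (∏ i, Xᴴ (p i) i) * (X.submatrix id p).det with hu
  have hnoninj : ∀ p : Fin N → m, ¬ Function.Injective p → u p = 0 := by
    intro p hp
    rw [Function.not_injective_iff] at hp
    obtain ⟨i, j, hpij, hij⟩ := hp
    have : (X.submatrix id p).det = 0 :=
      Matrix.det_zero_of_column_eq hij (fun k => by simp [Matrix.submatrix_apply, hpij])
    simp [hu, this]
  have h2 : (X * Xᴴ).det = ∑ p : Fin N → m, u p := aux_cb_expand X Xᴴ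
  have h1 : (X * Matrix.diagonal (fun s => (d s : ℂ)) * Xᴴ).det
      = ∑ p : Fin N → m, ((∏ i, d (p i) : ℝ) : ℂ) * u p := by
    rw [Matrix.mul_assoc, aux_cb_expand X (Matrix.diagonal (fun s => (d s : ℂ)) * Xᴴ)]
    congr 1; ext p
    have : ∀ i : Fin N, (Matrix.diagonal (fun s => (d s : ℂ)) * Xᴴ) (p i) i
        = (d (p i) : ℂ) * Xᴴ (p i) i := by
      intro i; rw [Matrix.diagonal_mul]
    simp only [this]
    rw [Finset.prod_mul_distrib]
    push_cast
    ring
  set key : (Fin N → m) → Finset m := fun p => Finset.image p Finset.univ with hkey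
  set V : Finset m → ℝ := fun S => ∑ p ∈ Finset.univ.filter (fun p => key p = S), (u p).re
    with hV
  have hVnonneg : ∀ S : Finset m, 0 ≤ V S := by
    intro S
    by_cases hcard : S.card = N
    · set Y : Matrix (Fin N) {x // x ∈ S} ℂ := X.submatrix id (fun t => (t : m)) with hY
      have hdet : (Y * Yᴴ).det = ∑ p ∈ Finset.univ.filter (fun p => key p = S), u p := by
        rw [aux_cb_expand Y Yᴴ]
        have e_inj : Function.Injective
            (fun (q : Fin N → {x // x ∈ S}) => (fun i => ((q i : m))) : _ → (Fin N → m)) := by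
          intro q q' hqq'
          funext i
          exact Subtype.ext (congrFun hqq' i)
        calc (∑ q : Fin N → {x // x ∈ S}, (∏ i, Yᴴ (q i) i) * (Y.submatrix id q).det)
            = ∑ q : Fin N → {x // x ∈ S}, u (fun i => ((q i : m))) := rfl
          _ = ∑ p ∈ Finset.univ.image (fun (q : Fin N → {x // x ∈ S}) (i : Fin N) => (q i : m)),
                u p := by
              rw [Finset.sum_image (fun q _ q' _ h => e_inj h)]
          _ = ∑ p ∈ Finset.univ.filter (fun p => key p = S), u p := by
              apply (Finset.sum_subset ?_ ?_).symm
              · intro p hp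
                rw [Finset.mem_filter] at hp
                rw [Finset.mem_image]
                have hps : ∀ i, p i ∈ S := by
                  intro i
                  rw [← hp.2, hkey]
                  exact Finset.mem_image_of_mem p (Finset.mem_univ i)
                exact ⟨fun i => ⟨p i, hps i⟩, Finset.mem_univ _, rfl⟩
              · intro p hp hpnot
                rw [Finset.mem_image] at hp
                obtain ⟨q, -, rfl⟩ := hp
                apply hnoninj
                intro hinj
                apply hpnot
                rw [Finset.mem_filter]
                refine ⟨Finset.mem_univ _, ?_⟩
                have hqinj : Function.Injective q := fun a b hab => hinj (by simp [hab])
                have hqbij : Function.Bijective q := by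
                  rw [Fintype.bijective_iff_injective_and_card]
                  refine ⟨hqinj, ?_⟩
                  simp [Fintype.card_coe, hcard]
                have : Finset.univ.image q = Finset.univ :=
                  Finset.image_univ_of_surjective hqbij.2
                rw [hkey]
                show Finset.image ((fun (t : {x // x ∈ S}) => (t : m)) ∘ q) Finset.univ = S
                rw [← Finset.image_image, this, Finset.univ_eq_attach, Finset.attach_image_val]
      have : V S = ((Y * Yᴴ).det).re := by
        rw [hdet, Complex.re_sum]
      rw [this]
      exact aux_psd_det_re_nonneg _ (Matrix.posSemidef_self_mul_conjTranspose Y)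
    · apply Finset.sum_nonneg
      intro p hp
      rw [Finset.mem_filter] at hp
      have : ¬ Function.Injective p := by
        intro hinj
        apply hcard
        rw [← hp.2, hkey, Finset.card_image_of_injective _ hinj, Finset.card_univ,
          Fintype.card_fin]
      rw [hnoninj p this]
      simp
  have hLHS : ((X * Matrix.diagonal (fun s => (d s : ℂ)) * Xᴴ).det).re
      = ∑ S : Finset m, (∏ s ∈ S, d s) * V S := by
    rw [h1, Complex.re_sum]
    have hterm : ∀ p : Fin N → m,
        (((∏ i, d (p i) : ℝ) : ℂ) * u p).re = (∏ s ∈ key p, d s) * (u p).re := by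
      intro p
      rw [Complex.re_ofReal_mul]
      by_cases hinj : Function.Injective p
      · congr 1
        rw [hkey]
        exact (Finset.prod_image (fun a _ b _ h => hinj h)).symm
      · rw [hnoninj p hinj]
        simp
    calc (∑ p : Fin N → m, (((∏ i, d (p i) : ℝ) : ℂ) * u p).re)
        = ∑ p : Fin N → m, (∏ s ∈ key p, d s) * (u p).re := by
          congr 1; ext p; exact hterm p
      _ = ∑ S : Finset m, ∑ p ∈ Finset.univ.filter (fun p => key p = S),
            (∏ s ∈ key p, d s) * (u p).re := by
          exact (Finset.sum_fiberwise_of_maps_to (fun p _ => Finset.mem_univ (key p)) _).symm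
      _ = ∑ S : Finset m, (∏ s ∈ S, d s) * V S := by
          congr 1; ext S
          rw [hV, Finset.mul_sum]
          apply Finset.sum_congr rfl
          intro p hp
          rw [Finset.mem_filter] at hp
          rw [hp.2]
  have hRHS : ((X * Xᴴ).det).re = ∑ S : Finset m, V S := by
    rw [h2, Complex.re_sum]
    exact (Finset.sum_fiberwise_of_maps_to (fun p _ => Finset.mem_univ (key p)) _).symm
  rw [hLHS, hRHS, Finset.mul_sum]
  exact Finset.sum_le_sum fun S _ => mul_le_mul_of_nonneg_right (hc S) (hVnonneg S)

lemma aux_block_identity {n : ℕ} (A B E E' : Matrix (Fin n) (Fin n) ℂ) (e : ℂ)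
    (he : e * e = -1) (he' : starRingEnd ℂ e = -e) :
    (fromCols 1 (e • 1) : Matrix (Fin n) (Fin n ⊕ Fin n) ℂ) *
      (fromBlocks A B (-B) A * fromBlocks E 0 0 E' * fromBlocks A B (-B) A) *
      (fromCols 1 (e • 1) : Matrix (Fin n) (Fin n ⊕ Fin n) ℂ)ᴴ
    = (A - e • B) * (E + E') * (A - e • B) := by
  rw [Matrix.conjTranspose_fromCols_eq_fromRows_conjTranspose]
  have hstar : star e = -e := he'
  simp only [Matrix.conjTranspose_smul, Matrix.conjTranspose_one, hstar]
  rw [Matrix.fromBlocks_multiply, Matrix.fromBlocks_multiply,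
    Matrix.fromCols_mul_fromBlocks, Matrix.fromCols_mul_fromRows]
  simp only [Matrix.mul_zero, Matrix.zero_mul, add_zero, zero_add, Matrix.one_mul,
    Matrix.mul_one, Matrix.smul_mul, Matrix.mul_smul, Matrix.neg_mul, Matrix.mul_neg,
    smul_smul, sub_eq_add_neg, Matrix.add_mul, Matrix.mul_add, neg_smul, smul_neg,
    he, one_smul, neg_neg, neg_add, smul_add]
  abel

lemma aux_subset_prod_bound {n : ℕ} (ϱ : Fin n → ℝ) (S : Finset (Fin n ⊕ Fin n)) :
    ∏ s ∈ S, Sum.elim (fun j => Real.exp (ϱ j)) (fun j => Real.exp (-ϱ j)) s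
      ≤ Real.exp (∑ j, |ϱ j|) := by
  have h1 : ∏ s ∈ S, Sum.elim (fun j => Real.exp (ϱ j)) (fun j => Real.exp (-ϱ j)) s
      = Real.exp (∑ s ∈ S, Sum.elim (fun j => ϱ j) (fun j => -ϱ j) s) := by
    rw [Real.exp_sum]; apply Finset.prod_congr rfl; intro s _; cases s <;> simp
  rw [h1, Real.exp_le_exp]
  have h2 : ∑ s ∈ S, Sum.elim (fun j => ϱ j) (fun j => -ϱ j) s
      = ∑ s : Fin n ⊕ Fin n,
          (if s ∈ S then Sum.elim (fun j => ϱ j) (fun j => -ϱ j) s else 0) := by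
    rw [Finset.sum_ite_mem, Finset.univ_inter]
  rw [h2, Fintype.sum_sum_type]
  simp only [Sum.elim_inl, Sum.elim_inr]
  rw [← Finset.sum_add_distrib]
  apply Finset.sum_le_sum
  intro j _
  split_ifs with h h' h'
  · simp
  · simpa using le_abs_self (ϱ j)
  · simpa using neg_le_abs (ϱ j)
  · simp

lemma aux_herm_det_im {n : ℕ} (M : Matrix (Fin n) (Fin n) ℂ) (h : Mᴴ = M) : M.det.im = 0 := by
  have h1 := Matrix.det_conjTranspose M
  rw [h] at h1
  exact Complex.conj_eq_iff_im.mp h1.symm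

lemma aux_det_sq_bound {n : ℕ} (A B : Matrix (Fin n) (Fin n) ℂ)
    (k₀c : Matrix (Fin n ⊕ Fin n) (Fin n ⊕ Fin n) ℂ)
    (hk₀ : k₀cᴴ = k₀cᵀ) (hk₀o : k₀cᵀ * k₀c = 1)
    (u : Matrix (Fin n ⊕ Fin n) (Fin n ⊕ Fin n) ℂ) (huunit : u * uᴴ = 1)
    (r ϱ : Fin n → ℝ)
    (hmid : (fromBlocks A B (-B) A) * expDiag r * (fromBlocks A B (-B) A)
      = k₀cᵀ * (u * expDiag ϱ * uᴴ) * k₀c)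
    (e : ℂ) (he : e * e = -1) (he' : starRingEnd ℂ e = -e)
    (him : ((A - e • B).det).im = 0) :
    (((A - e • B).det).re)^2 * ∏ j, Real.cosh (r j) ≤ Real.exp (∑ j, |ϱ j|) := by
  classical
  set P : Matrix (Fin n) (Fin n ⊕ Fin n) ℂ := fromCols 1 (e • 1) with hP
  set X : Matrix (Fin n) (Fin n ⊕ Fin n) ℂ := P * k₀cᵀ * u with hX
  have hkt : (k₀cᵀ)ᴴ = k₀c := by
    rw [← hk₀, Matrix.conjTranspose_conjTranspose]
  have hXH : Xᴴ = uᴴ * (k₀c * Pᴴ) := by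
    rw [hX, Matrix.conjTranspose_mul, Matrix.conjTranspose_mul, hkt]
  have hPP : P * Pᴴ = (2 : ℂ) • (1 : Matrix (Fin n) (Fin n) ℂ) := by
    rw [hP, Matrix.conjTranspose_fromCols_eq_fromRows_conjTranspose,
      Matrix.fromCols_mul_fromRows]
    have hstar : star e = -e := he'
    simp only [Matrix.conjTranspose_smul, Matrix.conjTranspose_one, hstar,
      Matrix.smul_mul, Matrix.mul_smul, smul_smul, Matrix.one_mul, Matrix.mul_one]
    rw [show (-e * e : ℂ) = 1 by rw [neg_mul, he, neg_neg], one_smul, two_smul]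
  have hXX : X * Xᴴ = (2 : ℂ) • (1 : Matrix (Fin n) (Fin n) ℂ) := by
    rw [hXH, hX]
    calc P * k₀cᵀ * u * (uᴴ * (k₀c * Pᴴ))
        = P * ((k₀cᵀ * (u * uᴴ)) * k₀c) * Pᴴ := by
          simp only [Matrix.mul_assoc]
      _ = P * Pᴴ := by rw [huunit, Matrix.mul_one, hk₀o, Matrix.mul_one]
      _ = _ := hPP
  set E : Matrix (Fin n) (Fin n) ℂ := Matrix.diagonal fun j => ((Real.exp (r j) : ℝ) : ℂ)
    with hE
  set E' : Matrix (Fin n) (Fin n) ℂ := Matrix.diagonal fun j => ((Real.exp (-(r j)) : ℝ) : ℂ)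
    with hE'
  have hXDX : X * expDiag ϱ * Xᴴ = (A - e • B) * (E + E') * (A - e • B) := by
    rw [hXH, hX]
    calc P * k₀cᵀ * u * expDiag ϱ * (uᴴ * (k₀c * Pᴴ))
        = P * (k₀cᵀ * (u * expDiag ϱ * uᴴ) * k₀c) * Pᴴ := by
          simp only [Matrix.mul_assoc]
      _ = P * (fromBlocks A B (-B) A * expDiag r * fromBlocks A B (-B) A) * Pᴴ := by
          rw [← hmid]
      _ = _ := by
          rw [hP]
          exact aux_block_identity A B E E' e he he'
  set d : (Fin n ⊕ Fin n) → ℝ :=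
    Sum.elim (fun j => Real.exp (ϱ j)) (fun j => Real.exp (-ϱ j)) with hd
  have hdiag : expDiag ϱ = Matrix.diagonal (fun s => (d s : ℂ)) := by
    rw [expDiag, Matrix.fromBlocks_diagonal]
    congr 1
    funext s
    cases s <;> rfl
  have hcore := aux_core_ineq X d (Real.exp (∑ j, |ϱ j|)) (aux_subset_prod_bound ϱ)
  rw [← hdiag, hXDX, hXX] at hcore
  set t : ℝ := ((A - e • B).det).re with ht
  have hdet1 : (A - e • B).det = (t : ℂ) := by
    apply Complex.ext
    · rfl
    · simpa using him
  have hEE' : E + E' = Matrix.diagonal fun j => ((2 * Real.cosh (r j) : ℝ) : ℂ) := by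
    have hfg : (fun j => ((Real.exp (r j) : ℝ) : ℂ) + ((Real.exp (-(r j)) : ℝ) : ℂ))
        = fun j => ((2 * Real.cosh (r j) : ℝ) : ℂ) := by
      funext j
      rw [← Complex.ofReal_add, Real.cosh_eq]
      ring_nf
    rw [hE, hE', Matrix.diagonal_add, hfg]
  have hdetEE : (E + E').det = ((∏ j, (2 * Real.cosh (r j)) : ℝ) : ℂ) := by
    rw [hEE', Matrix.det_diagonal, Complex.ofReal_prod]
  have hL : ((A - e • B) * (E + E') * (A - e • B)).det.re
      = t^2 * ∏ j, (2 * Real.cosh (r j)) := by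
    rw [Matrix.det_mul, Matrix.det_mul, hdet1, hdetEE]
    rw [← Complex.ofReal_mul, ← Complex.ofReal_mul, Complex.ofReal_re]
    ring
  have hR : (((2 : ℂ) • (1 : Matrix (Fin n) (Fin n) ℂ)).det).re = (2 : ℝ)^n := by
    rw [Matrix.det_smul, Matrix.det_one, mul_one]
    rw [show ((2:ℂ)) = ((2:ℝ):ℂ) by norm_num, ← Complex.ofReal_pow, Complex.ofReal_re,
      Fintype.card_fin]
  rw [hL, hR] at hcore
  have hprod : ∏ j, (2 * Real.cosh (r j)) = 2^n * ∏ j, Real.cosh (r j) := by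
    rw [Finset.prod_mul_distrib, Finset.prod_const, Finset.card_univ, Fintype.card_fin]
  rw [hprod] at hcore
  have h2n : (0:ℝ) < 2^n := by positivity
  nlinarith [hcore]

lemma aux_final (t t' Pc Ec : ℝ) (hPc0 : 0 < Pc) (hPc1 : 1 ≤ Pc) (hEc0 : 0 < Ec)
    (htt' : t * t' = 1) (hb1 : t^2 * Pc ≤ Ec) (hb2 : t'^2 * Pc ≤ Ec) :
    t ≤ Ec / Pc := by
  rw [le_div_iff₀ hPc0]
  rcases le_or_gt t 0 with ht0 | ht0
  · exact le_trans (mul_nonpos_of_nonpos_of_nonneg ht0 hPc0.le) hEc0.le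
  · rcases le_or_gt t 1 with ht1 | ht1
    · have ht2 : t^2 ≤ 1 := by nlinarith
      have hsq : t'^2 * t^2 = 1 := by
        rw [show t'^2 * t^2 = (t * t')^2 from by ring, htt', one_pow]
      have ht'2 : 1 ≤ t'^2 := by nlinarith [sq_nonneg t']
      calc t * Pc ≤ 1 * Pc := by nlinarith [mul_nonneg (sub_nonneg.mpr ht1) hPc0.le]
        _ = Pc := one_mul _
        _ ≤ t'^2 * Pc := by nlinarith [mul_nonneg (sub_nonneg.mpr ht'2) hPc0.le]
        _ ≤ Ec := hb2
    · have hstep : t * Pc ≤ t^2 * Pc := by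
        nlinarith [mul_nonneg (mul_nonneg ht0.le (sub_nonneg.mpr ht1.le)) hPc0.le]
      exact le_trans hstep hb1

end AuxLemmas

/-- **Bound on the determinant of the Hermitian part of a complex symplectic orthogonal
matrix.** If `k = k₀ k_h` is complex symplectic orthogonal with `k₀` real symplectic
orthogonal and `k_h = [[A,B],[−B,A]]` Hermitian orthogonal so that `h = A + iB` is
Hermitian, and if `k exp(r) conj(k)ᵀ = u exp(ϱ) conj(u)ᵀ` with `u` unitary symplectic and
`r, ϱ` diagonal with `r_j ≥ 0`, then `det(h)` is real and
`det(h) ≤ exp(Σ_j |ϱ_j|) / Π_j cosh(r_j)`. -/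
theorem det_hermitian_part_bound (n : ℕ) (hn : 1 ≤ n)
    (k : Matrix (Fin n ⊕ Fin n) (Fin n ⊕ Fin n) ℂ)
    (hksymp : kᵀ * JmatC n * k = JmatC n)
    (hkorth : k * kᵀ = 1)
    (k₀ : Matrix (Fin n ⊕ Fin n) (Fin n ⊕ Fin n) ℝ)
    (hk₀symp : k₀ᵀ * JmatR n * k₀ = JmatR n)
    (hk₀orth : k₀ * k₀ᵀ = 1)
    (A B : Matrix (Fin n) (Fin n) ℂ)
    (hdecomp : k = (k₀.map fun x => (x : ℂ)) * Matrix.fromBlocks A B (-B) A)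
    (horth : A * Aᵀ + B * Bᵀ = 1)
    (hcomm : A * Bᵀ = B * Aᵀ)
    (hA : Aᴴ = A) (hB : Bᴴ = -B)
    (r ϱ : Fin n → ℝ) (hr : ∀ j, 0 ≤ r j)
    (u : Matrix (Fin n ⊕ Fin n) (Fin n ⊕ Fin n) ℂ)
    (husymp : uᵀ * JmatC n * u = JmatC n)
    (huunit : u * uᴴ = 1)
    (heq : k * expDiag r * kᴴ = u * expDiag ϱ * uᴴ) :
    ((A + Complex.I • B).det).im = 0 ∧
      ((A + Complex.I • B).det).re ≤
        Real.exp (∑ j, |ϱ j|) / ∏ j, Real.cosh (r j) := by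
  classical
  set k₀c : Matrix (Fin n ⊕ Fin n) (Fin n ⊕ Fin n) ℂ := k₀.map (fun x => (x : ℂ)) with hk₀c
  set kh : Matrix (Fin n ⊕ Fin n) (Fin n ⊕ Fin n) ℂ := Matrix.fromBlocks A B (-B) A with hkh
  -- basic facts about the real matrix k₀
  have hk₀H : k₀cᴴ = k₀cᵀ := by
    ext i j
    simp [hk₀c, Matrix.conjTranspose_apply, Matrix.transpose_apply, Matrix.map_apply,
      Complex.conj_ofReal]
  have hmapmul : ∀ (M N : Matrix (Fin n ⊕ Fin n) (Fin n ⊕ Fin n) ℝ),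
      (M * N).map (fun x => (x : ℂ)) = M.map (fun x => (x : ℂ)) * N.map (fun x => (x : ℂ)) := by
    intro M N
    ext i j
    simp [Matrix.mul_apply, Matrix.map_apply]
  have hk₀o : k₀cᵀ * k₀c = 1 := by
    have h1 : k₀ᵀ * k₀ = 1 := mul_eq_one_comm.mp hk₀orth
    have h2 : k₀cᵀ = (k₀ᵀ).map (fun x => (x : ℂ)) := by
      ext i j
      simp [hk₀c, Matrix.transpose_apply, Matrix.map_apply]
    rw [h2, hk₀c, ← hmapmul, h1]
    ext i j
    by_cases h : i = j <;> simp [Matrix.one_apply, h, Matrix.map_apply]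
  -- k_h is Hermitian
  have khH : khᴴ = kh := by
    rw [hkh, Matrix.fromBlocks_conjTranspose, Matrix.conjTranspose_neg, hA, hB, neg_neg]
  -- the middle identity
  have hmid : kh * expDiag r * kh = k₀cᵀ * (u * expDiag ϱ * uᴴ) * k₀c := by
    rw [← heq, hdecomp]
    have hkH : (k₀c * kh)ᴴ = kh * k₀cᵀ := by
      rw [Matrix.conjTranspose_mul, khH, hk₀H]
    rw [hkH]
    calc kh * expDiag r * kh
        = (k₀cᵀ * k₀c) * (kh * expDiag r * kh) * (k₀cᵀ * k₀c) := by
          rw [hk₀o, Matrix.one_mul, Matrix.mul_one]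
      _ = k₀cᵀ * (k₀c * kh * expDiag r * (kh * k₀cᵀ)) * k₀c := by
          simp only [Matrix.mul_assoc]
  -- Hermitian-ness of A ± iB
  have hherm1 : (A + Complex.I • B)ᴴ = A + Complex.I • B := by
    rw [Matrix.conjTranspose_add, Matrix.conjTranspose_smul, hA, hB]
    simp [Complex.conj_I]
  have hherm2 : (A - Complex.I • B)ᴴ = A - Complex.I • B := by
    rw [Matrix.conjTranspose_sub, Matrix.conjTranspose_smul, hA, hB]
    simp [Complex.conj_I]
  have him1 : ((A + Complex.I • B).det).im = 0 := aux_herm_det_im _ hherm1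
  have him2 : ((A - Complex.I • B).det).im = 0 := aux_herm_det_im _ hherm2
  refine ⟨him1, ?_⟩
  -- the two square bounds
  have e1eq : A - (-Complex.I) • B = A + Complex.I • B := by
    rw [neg_smul, sub_neg_eq_add]
  have b1 := aux_det_sq_bound A B k₀c hk₀H hk₀o u huunit r ϱ hmid (-Complex.I)
    (by rw [neg_mul_neg, Complex.I_mul_I]) (by simp)
    (by rw [e1eq]; exact him1)
  rw [e1eq] at b1
  have b2 := aux_det_sq_bound A B k₀c hk₀H hk₀o u huunit r ϱ hmid Complex.I
    (Complex.I_mul_I) (by simp [Complex.conj_I])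
    him2
  -- product of the two determinants is 1
  have hmulid : (A + Complex.I • B) * (A - Complex.I • B)ᵀ = 1 := by
    have httr : (A - Complex.I • B)ᵀ = Aᵀ - Complex.I • Bᵀ := by
      rw [Matrix.transpose_sub, Matrix.transpose_smul]
    rw [httr]
    have expand : (A + Complex.I • B) * (Aᵀ - Complex.I • Bᵀ)
        = (A * Aᵀ + B * Bᵀ) + Complex.I • (B * Aᵀ - A * Bᵀ) := by
      ext i j
      simp only [Matrix.mul_apply, Matrix.add_apply, Matrix.sub_apply, Matrix.smul_apply,
        Matrix.transpose_apply, smul_eq_mul, Finset.mul_sum, ← Finset.sum_add_distrib,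
        ← Finset.sum_sub_distrib]
      apply Finset.sum_congr rfl
      intro kk _
      linear_combination (-(B i kk * B j kk)) * Complex.I_sq
    rw [expand, horth, hcomm, sub_self, smul_zero, add_zero]
  have hdets : (A + Complex.I • B).det * (A - Complex.I • B).det = 1 := by
    have := congrArg Matrix.det hmulid
    rwa [Matrix.det_mul, Matrix.det_transpose, Matrix.det_one] at this
  -- pass to real numbers
  set t : ℝ := ((A + Complex.I • B).det).re with htdef
  set t' : ℝ := ((A - Complex.I • B).det).re with ht'def
  have hd1 : (A + Complex.I • B).det = (t : ℂ) := by
    apply Complex.ext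
    · rfl
    · simpa using him1
  have hd2 : (A - Complex.I • B).det = (t' : ℂ) := by
    apply Complex.ext
    · rfl
    · simpa using him2
  have htt' : t * t' = 1 := by
    have : ((t * t' : ℝ) : ℂ) = ((1 : ℝ) : ℂ) := by
      push_cast
      rw [← hd1, ← hd2, hdets]
    exact_mod_cast this
  -- final elementary computation
  set Pc : ℝ := ∏ j, Real.cosh (r j) with hPcdef
  have hPc0 : 0 < Pc := by
    rw [hPcdef]; exact Finset.prod_pos fun j _ => Real.cosh_pos _
  have hPc1 : 1 ≤ Pc := by
    rw [hPcdef]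
    have := Finset.prod_le_prod (s := Finset.univ) (f := fun _ : Fin n => (1:ℝ))
      (g := fun j => Real.cosh (r j)) (by intros; norm_num)
      (by intro j _; exact Real.one_le_cosh (r j))
    simpa using this
  set Ec : ℝ := Real.exp (∑ j, |ϱ j|) with hEcdef
  have hEc0 : 0 < Ec := Real.exp_pos _
  have hb1 : t^2 * Pc ≤ Ec := b1
  have hb2 : t'^2 * Pc ≤ Ec := b2
  clear_value t t' Pc Ec
  exact aux_final t t' Pc Ec hPc0 hPc1 hEc0 htt' hb1 hb2
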